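/- Let R be a ring, G a group, χ: G → ℤ a surjective homomorphism with kernel N, and t ∈ G with χ(t) = 1. Then there is a short exact sequence of left R[N]-modules 0 → R[G] → \widehat{R[G]}^χ ⊕ \widehat{R[G]}^{-χ} → ∏_{ℤ} R[N] → 0, where the maps are induced by writing elements as series ∑_{i∈ℤ} λ_i t^i with λ_i ∈ R[N]. -/

import Mathlib

noncomputable section
open Function MulOpposite

/-- `IsFP S n M`: the `S`-module `M` is of type `FPₙ`. -/
def IsFP (S : Type) [Ring S] : ℕ → ModuleCat.{0} S → Prop
  | 0, M => Module.Finite S M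
  | n+1, M => ∃ (d : ℕ) (φ : (Fin d → S) →ₗ[S] M), Function.Surjective φ ∧
      IsFP S n (ModuleCat.of S (LinearMap.ker φ))

/-- Unbundled version of `IsFP`. -/
def IsFPMod (S : Type) [Ring S] (n : ℕ) (M : Type) [AddCommGroup M] [Module S M] : Prop :=
  IsFP S n (ModuleCat.of S M)

section RTensor

variable (R : Type) [Ring R] (M : Type) [AddCommGroup M] [Module Rᵐᵒᵖ M]
  (N : Type) [AddCommGroup N] [Module R N]

/-- The balancing relations for the tensor product of a right `R`-module `M`
(i.e. a left `Rᵐᵒᵖ`-module) and a left `R`-module `N`. -/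
def RTensor.rel : AddSubgroup (TensorProduct ℤ M N) :=
  AddSubgroup.closure {x | ∃ (r : R) (m : M) (n : N),
    x = ((op r • m) ⊗ₜ[ℤ] n) - (m ⊗ₜ[ℤ] (r • n))}

/-- The balanced tensor product `M ⊗_R N` of a right `R`-module and a left `R`-module,
as an abelian group. -/
def RTensor : Type := TensorProduct ℤ M N ⧸ RTensor.rel R M N

instance : AddCommGroup (RTensor R M N) :=
  inferInstanceAs (AddCommGroup (TensorProduct ℤ M N ⧸ RTensor.rel R M N))

/-- The canonical projection. -/
def RTensor.mk : TensorProduct ℤ M N →+ RTensor R M N :=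
  QuotientAddGroup.mk' (RTensor.rel R M N)

/-- Elementary tensors in `RTensor`. -/
def RTensor.tmul (m : M) (n : N) : RTensor R M N := RTensor.mk R M N (m ⊗ₜ[ℤ] n)

theorem RTensor.tmul_balanced (r : R) (m : M) (n : N) :
    RTensor.tmul R M N (op r • m) n = RTensor.tmul R M N m (r • n) := by
  refine (QuotientAddGroup.mk'_eq_mk' _).2 ⟨(m ⊗ₜ[ℤ] (r • n)) - ((op r • m) ⊗ₜ[ℤ] n), ?_, by abel⟩
  have h : ((op r • m) ⊗ₜ[ℤ] n) - (m ⊗ₜ[ℤ] (r • n)) ∈ RTensor.rel R M N :=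
    AddSubgroup.subset_closure ⟨r, m, n, rfl⟩
  simpa [neg_sub] using AddSubgroup.neg_mem _ h

theorem RTensor.tmul_add (m : M) (n n' : N) :
    RTensor.tmul R M N m (n + n') = RTensor.tmul R M N m n + RTensor.tmul R M N m n' := by
  rw [RTensor.tmul, TensorProduct.tmul_add, map_add]; rfl

theorem RTensor.add_tmul (m m' : M) (n : N) :
    RTensor.tmul R M N (m + m') n = RTensor.tmul R M N m n + RTensor.tmul R M N m' n := by
  rw [RTensor.tmul, TensorProduct.add_tmul, map_add]; rfl

theorem RTensor.tmul_zero (m : M) : RTensor.tmul R M N m 0 = 0 := by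
  rw [RTensor.tmul, TensorProduct.tmul_zero, map_zero]

theorem RTensor.zero_tmul (n : N) : RTensor.tmul R M N (0 : M) n = 0 := by
  rw [RTensor.tmul, TensorProduct.zero_tmul, map_zero]

variable {R M N}

/-- Lifting a balanced biadditive map to the balanced tensor product. -/
def RTensor.lift {A : Type} [AddCommGroup A] (f : M →+ N →+ A)
    (hf : ∀ (r : R) (m : M) (n : N), f (op r • m) n = f m (r • n)) :
    RTensor R M N →+ A := by
  refine QuotientAddGroup.lift (RTensor.rel R M N)
    (TensorProduct.lift (LinearMap.mk₂ ℤ (fun m n => f m n)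
      (by intro m₁ m₂ n; simp)
      (by intro z m n; simp)
      (by intro m n₁ n₂; simp)
      (by intro z m n; simp))).toAddMonoidHom ?_
  unfold RTensor.rel
  refine (AddSubgroup.closure_le _).2 ?_
  rintro x ⟨r, m, n, rfl⟩
  simp [hf r m n]

@[simp] theorem RTensor.lift_tmul {A : Type} [AddCommGroup A] (f : M →+ N →+ A)
    (hf : ∀ (r : R) (m : M) (n : N), f (op r • m) n = f m (r • n)) (m : M) (n : N) :
    RTensor.lift f hf (RTensor.tmul R M N m n) = f m n := by
  show QuotientAddGroup.lift _ _ _ (QuotientAddGroup.mk (m ⊗ₜ[ℤ] n)) = _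
  erw [QuotientAddGroup.lift_mk]

end RTensor

section Maps

variable (R : Type) [Ring R] (M : Type) [AddCommGroup M] [Module Rᵐᵒᵖ M]
  {N N' : Type} [AddCommGroup N] [Module R N] [AddCommGroup N'] [Module R N']

/-- Functoriality of the balanced tensor product in the left-module variable. -/
def RTensor.mapRight (g : N →ₗ[R] N') : RTensor R M N →+ RTensor R M N' :=
  RTensor.lift
    { toFun := fun m =>
        { toFun := fun n => RTensor.tmul R M N' m (g n)
          map_zero' := by
            show RTensor.tmul R M N' m (g 0) = 0
            rw [map_zero]; exact RTensor.tmul_zero R M N' m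
          map_add' := by
            intro n n'
            show RTensor.tmul R M N' m (g (n + n')) = _
            rw [map_add]; exact RTensor.tmul_add R M N' m _ _ }
      map_zero' := by
        ext n
        show RTensor.tmul R M N' 0 (g n) = 0
        exact RTensor.zero_tmul R M N' _
      map_add' := by
        intro m m'
        ext n
        show RTensor.tmul R M N' (m + m') (g n) = _
        exact RTensor.add_tmul R M N' m m' _ }
    (by
      intro r m n
      show RTensor.tmul R M N' (op r • m) (g n) = RTensor.tmul R M N' m (g (r • n))
      rw [map_smul]
      exact RTensor.tmul_balanced R M N' r m (g n))

end Maps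

section MapLeft

variable (R : Type) [Ring R] {M M' : Type} [AddCommGroup M] [Module Rᵐᵒᵖ M]
  [AddCommGroup M'] [Module Rᵐᵒᵖ M'] (N : Type) [AddCommGroup N] [Module R N]

/-- Functoriality of the balanced tensor product in the right-module variable. -/
def RTensor.mapLeft (g : M →ₗ[Rᵐᵒᵖ] M') : RTensor R M N →+ RTensor R M' N :=
  RTensor.lift
    { toFun := fun m =>
        { toFun := fun n => RTensor.tmul R M' N (g m) n
          map_zero' := RTensor.tmul_zero R M' N _
          map_add' := fun n n' => RTensor.tmul_add R M' N _ n n' }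
      map_zero' := by
        ext n
        show RTensor.tmul R M' N (g 0) n = 0
        rw [map_zero]; exact RTensor.zero_tmul R M' N n
      map_add' := by
        intro m m'
        ext n
        show RTensor.tmul R M' N (g (m + m')) n = _
        rw [map_add]; exact RTensor.add_tmul R M' N _ _ n }
    (by
      intro r m n
      show RTensor.tmul R M' N (g (op r • m)) n = RTensor.tmul R M' N (g m) (r • n)
      rw [map_smul]
      exact RTensor.tmul_balanced R M' N r (g m) n)

end MapLeft

section Resolutions

variable (S : Type) [Ring S] (N : Type) [AddCommGroup N] [Module S N]

/-- A free resolution `⋯ → F₂ → F₁ → F₀ → N → 0` of a left `S`-module `N`. -/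
structure FreeResolution : Type 1 where
  ι : ℕ → Type
  d : ∀ n : ℕ, ((ι (n+1)) →₀ S) →ₗ[S] ((ι n) →₀ S)
  augm : ((ι 0) →₀ S) →ₗ[S] N
  augm_surj : Function.Surjective augm
  exact_augm : Function.Exact (d 0) augm
  exact : ∀ n : ℕ, Function.Exact (d (n+1)) (d n)

variable (M : Type) [AddCommGroup M] [Module Sᵐᵒᵖ M]

/-- `TorVanishes S M N i` asserts that `Tor_i^S(M, N) = 0`, where `M` is a right
`S`-module and `N` is a left `S`-module: for every free resolution `F_• → N`, the
complex `M ⊗_S F_•` has trivial homology in degree `i`. -/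
def TorVanishes : ℕ → Prop
  | 0 => ∀ res : FreeResolution S N, Function.Surjective (RTensor.mapRight S M (res.d 0))
  | (i+1) => ∀ res : FreeResolution S N,
      Function.Exact (RTensor.mapRight S M (res.d (i+1))) (RTensor.mapRight S M (res.d i))

/-- A left `S`-module `N` is flat if `Tor₁^S(M, N) = 0` for every right `S`-module `M`. -/
def IsFlatModule : Prop :=
  ∀ (M : Type) [AddCommGroup M] [Module Sᵐᵒᵖ M], TorVanishes S N M 1

end Resolutions

/-- `Tor_i^S(M, N) = 0` for a right `S`-module `M` and a left `S`-module `N`. -/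
def TorIsZero (S : Type) [Ring S] (M : Type) [AddCommGroup M] [Module Sᵐᵒᵖ M]
    (N : Type) [AddCommGroup N] [Module S N] (i : ℕ) : Prop :=
  TorVanishes S N M i

section GroupRings

variable (R : Type) [Ring R] (G : Type) [Group G]

/-- The augmentation ring homomorphism `R[G] → R`, `∑ r_g g ↦ ∑ r_g`. -/
def augMap : MonoidAlgebra R G →+* R :=
  MonoidAlgebra.liftNCRingHom (RingHom.id R) (1 : G →* R)
    (fun x y => by simp [Commute.one_right])

/-- The augmentation ideal of `R[G]`, as a left ideal. -/
def augIdeal : Ideal (MonoidAlgebra R G) := RingHom.ker (augMap R G)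

/-- The augmentation ideal of `R[G]`, as a right `R[G]`-module. -/
def augIdealRight : Submodule (MonoidAlgebra R G)ᵐᵒᵖ (MonoidAlgebra R G) where
  carrier := {x | augMap R G x = 0}
  add_mem' := by
    intro a b ha hb
    simp only [Set.mem_setOf_eq, map_add] at *
    rw [ha, hb, add_zero]
  zero_mem' := by simp
  smul_mem' := by
    intro c x hx
    simp only [Set.mem_setOf_eq] at *
    have : c • x = x * c.unop := rfl
    rw [this, map_mul, hx, zero_mul]

/-- The trivial left `R[G]`-module structure on `R`. -/
def trivialModule : Module (MonoidAlgebra R G) R := Module.compHom R (augMap R G)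

/-- The trivial right `R[G]`-module structure on `R`. -/
def trivialModuleRight : Module (MonoidAlgebra R G)ᵐᵒᵖ R :=
  Module.compHom R (RingHom.op (augMap R G))

/-- The group `G` is of type `FPₙ(R)`: the trivial `R[G]`-module `R` is of type `FPₙ`. -/
def GroupIsFP (n : ℕ) : Prop :=
  letI := trivialModule R G
  IsFPMod (MonoidAlgebra R G) n R

end GroupRings
section Novikov

variable (R : Type) [Ring R] (G : Type) [Group G]

/-- Left multiplication by elements of `R` on functions `G → R`. -/
def lmulHom : R →+* Module.End ℤ (G → R) where
  toFun r :=
    { toFun := fun a x => r * a x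
      map_add' := by intro a b; funext x; simp [mul_add]
      map_smul' := by
        intro z a; funext x
        simp only [zsmul_eq_mul, Pi.intCast_apply, Pi.mul_apply, eq_intCast, RingHom.id_apply]
        rw [← mul_assoc, ← Int.cast_comm, mul_assoc]
        norm_cast }
  map_one' := by ext a x; simp
  map_mul' := by intro r s; ext a x; simp [mul_assoc]
  map_zero' := by ext a x; simp
  map_add' := by intro r s; ext a x; simp [add_mul]

/-- The (left) translation action of `G` on functions `G → R`. -/
def translationHom : G →* Module.End ℤ (G → R) where
  toFun h :=
    { toFun := fun a x => a (h⁻¹ * x)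
      map_add' := by intro a b; funext x; simp
      map_smul' := by intro z a; funext x; simp }
  map_one' := by ext a x; simp
  map_mul' := by intro g h; ext a x; simp [mul_assoc]

/-- The convolution action of `R[G]` on functions `G → R`, as a ring homomorphism
into additive endomorphisms. -/
def convolutionRho : MonoidAlgebra R G →+* Module.End ℤ (G → R) :=
  MonoidAlgebra.liftNCRingHom (lmulHom R G) (translationHom R G)
    (by
      intro r h
      ext a x
      simp [lmulHom, translationHom])

/-- The left `R[G]`-module structure on all functions `G → R` given by convolution. -/
def functionsModule : Module (MonoidAlgebra R G) (G → R) :=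
  Module.compHom (G → R) (convolutionRho R G)

/-- The defining support condition for the Novikov ring: for any `c`, only finitely many
elements of the support have `χ`-value at most `c`. -/
def NovikovSet (χ : G →* Multiplicative ℤ) : Set (G → R) :=
  {a | ∀ c : ℤ, {g : G | a g ≠ 0 ∧ (χ g).toAdd ≤ c}.Finite}

theorem NovikovSet.add_mem {χ : G →* Multiplicative ℤ} {a b : G → R}
    (ha : a ∈ NovikovSet R G χ) (hb : b ∈ NovikovSet R G χ) :
    a + b ∈ NovikovSet R G χ := by
  intro c
  refine ((ha c).union (hb c)).subset ?_
  rintro g ⟨hne, hle⟩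
  by_cases h1 : a g = 0
  · exact Or.inr ⟨by intro h2; exact hne (by simp [Pi.add_apply, h1, h2]), hle⟩
  · exact Or.inl ⟨h1, hle⟩

theorem NovikovSet.zero_mem (χ : G →* Multiplicative ℤ) : (0 : G → R) ∈ NovikovSet R G χ := by
  intro c
  convert Set.finite_empty using 1
  ext g; simp

theorem NovikovSet.single_smul_mem {χ : G →* Multiplicative ℤ} (h : G) (b : R) {a : G → R}
    (ha : a ∈ NovikovSet R G χ) :
    (fun x => b * a (h⁻¹ * x)) ∈ NovikovSet R G χ := by
  intro c
  refine ((ha (c - (χ h).toAdd)).image (fun g => h * g)).subset ?_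
  rintro g ⟨hne, hle⟩
  refine ⟨h⁻¹ * g, ⟨?_, ?_⟩, by simp⟩
  · intro h0
    apply hne
    show b * a (h⁻¹ * g) = 0
    rw [h0, mul_zero]
  · have hval : (χ (h⁻¹ * g)).toAdd = -(χ h).toAdd + (χ g).toAdd := by
      simp [map_mul]
    rw [hval]
    omega

/-- The Novikov completion `\widehat{R[G]}^χ` of `R[G]` at the character `χ`,
as a left `R[G]`-submodule of the module of all functions `G → R`. -/
def Novikov (χ : G →* Multiplicative ℤ) :
    @Submodule (MonoidAlgebra R G) (G → R) _ _ (functionsModule R G) :=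
  letI := functionsModule R G
  { carrier := NovikovSet R G χ
    add_mem' := by
      intro a b ha hb
      intro c
      refine ((ha c).union (hb c)).subset ?_
      intro g hg
      rcases hg with ⟨hne, hle⟩
      by_cases h1 : a g = 0
      · exact Or.inr ⟨by intro h2; exact hne (by simp [Pi.add_apply, h1, h2]), hle⟩
      · exact Or.inl ⟨h1, hle⟩
    zero_mem' := by
      intro c
      convert Set.finite_empty using 1
      ext g; simp
    smul_mem' := by
      intro c a ha
      show (convolutionRho R G c) a ∈ NovikovSet R G χ
      induction c using MonoidAlgebra.induction with
      | zero => simpa using NovikovSet.zero_mem R G χ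
      | single_add h b f _ _ ih =>
        rw [map_add]
        have hadd : (convolutionRho R G (MonoidAlgebra.single h b)
              + convolutionRho R G f) a
            = (convolutionRho R G (MonoidAlgebra.single h b)) a
              + (convolutionRho R G f) a := rfl
        rw [hadd]
        refine NovikovSet.add_mem R G ?_ ih
        have hsingle : (convolutionRho R G (MonoidAlgebra.single h b)) a
            = fun x => b * a (h⁻¹ * x) := by
          show (MonoidAlgebra.liftNC ((lmulHom R G) : R →+ Module.End ℤ (G → R))
              ⇑(translationHom R G)) (MonoidAlgebra.single h b) a = _
          rw [MonoidAlgebra.liftNC_single]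
          rfl
        rw [hsingle]
        exact NovikovSet.single_smul_mem R G h b ha }

end Novikov

section SES

variable (R : Type) [Ring R] (G : Type) [Group G]

theorem finsupp_mem_novikovSet (χ : G →* Multiplicative ℤ) (x : MonoidAlgebra R G) :
    ⇑x.coeff ∈ NovikovSet R G χ := fun _c => x.coeff.finite_support.subset fun _g hg => hg.1

theorem component_support_finite (χ : G →* Multiplicative ℤ) (t : G)
    (ht : χ t = Multiplicative.ofAdd 1) (a : G → R) (ha : a ∈ NovikovSet R G χ) (i : ℤ) :
    (Function.support fun nn : ↥χ.ker => a ((nn : G) * t ^ i)).Finite := by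
  have hinj : Function.Injective (fun nn : ↥χ.ker => (nn : G) * t ^ i) := by
    intro u v huv
    exact Subtype.ext (mul_right_cancel huv)
  refine ((ha i).preimage hinj.injOn).subset ?_
  intro nn hnn
  refine ⟨hnn, ?_⟩
  have h1 : χ (nn : G) = 1 := nn.2
  simp [map_zpow, h1, ht]

theorem component_support_finite' (χ : G →* Multiplicative ℤ) (t : G)
    (ht : χ t = Multiplicative.ofAdd 1) (a : G → R) (ha : a ∈ NovikovSet R G χ⁻¹) (i : ℤ) :
    (Function.support fun nn : ↥χ.ker => a ((nn : G) * t ^ i)).Finite := by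
  have hinj : Function.Injective (fun nn : ↥χ.ker => (nn : G) * t ^ i) := by
    intro u v huv
    exact Subtype.ext (mul_right_cancel huv)
  refine ((ha (-i)).preimage hinj.injOn).subset ?_
  intro nn hnn
  refine ⟨hnn, ?_⟩
  have h1 : χ (nn : G) = 1 := nn.2
  simp [map_zpow, h1, ht]

/-- The map `R[G] → \widehat{R[G]}^χ ⊕ \widehat{R[G]}^{-χ}` induced by the two canonical
inclusions. -/
def sesInto (χ : G →* Multiplicative ℤ) :
    MonoidAlgebra R G → ↥(Novikov R G χ) × ↥(Novikov R G χ⁻¹) :=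
  fun x => (⟨⇑x.coeff, finsupp_mem_novikovSet R G χ x⟩, ⟨⇑x.coeff, finsupp_mem_novikovSet R G χ⁻¹ x⟩)

/-- The map `\widehat{R[G]}^χ ⊕ \widehat{R[G]}^{-χ} → ∏_ℤ R[N]` given by forming the
difference of the expansions `x = ∑_{i ∈ ℤ} λ_i t^i` with `λ_i ∈ R[N]`. -/
def sesOnto (χ : G →* Multiplicative ℤ) (t : G) (ht : χ t = Multiplicative.ofAdd 1) :
    ↥(Novikov R G χ) × ↥(Novikov R G χ⁻¹) → (ℤ → MonoidAlgebra R ↥χ.ker) :=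
  fun p i =>
    MonoidAlgebra.ofCoeff (Finsupp.ofSupportFinite (fun nn : ↥χ.ker => p.1.1 ((nn : G) * t ^ i))
      (component_support_finite R G χ t ht p.1.1 p.1.2 i)
    - Finsupp.ofSupportFinite (fun nn : ↥χ.ker => p.2.1 ((nn : G) * t ^ i))
      (component_support_finite' R G χ t ht p.2.1 p.2.2 i))


section AuxSES

variable {R : Type} [Ring R] {G : Type} [Group G]

theorem MA_add_apply (u v : MonoidAlgebra R G) (g : G) : (u + v).coeff g = u.coeff g + v.coeff g := rfl

theorem MA_ext {u v : MonoidAlgebra R G} (h : ∀ g, u.coeff g = v.coeff g) : u = v :=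
  MonoidAlgebra.ext (Finsupp.ext h)

theorem toAdd_chi_mul_pow (χ : G →* Multiplicative ℤ) (t : G)
    (ht : χ t = Multiplicative.ofAdd 1) (nn : ↥χ.ker) (i : ℤ) :
    (χ ((nn : G) * t ^ i)).toAdd = i := by
  have h1 : χ (nn : G) = 1 := nn.2
  simp [map_mul, map_zpow, h1, ht]

theorem decomp_mem (χ : G →* Multiplicative ℤ) (t : G)
    (ht : χ t = Multiplicative.ofAdd 1) (g : G) :
    g * (t ^ (χ g).toAdd)⁻¹ ∈ χ.ker := by
  have h2 : Multiplicative.ofAdd (1 : ℤ) ^ (χ g).toAdd = χ g := by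
    rw [← ofAdd_zsmul]; simp
  simp [MonoidHom.mem_ker, map_mul, map_inv, map_zpow, ht, h2]

theorem convolutionRho_single_apply (h : G) (b : R) (a : G → R) :
    convolutionRho R G (MonoidAlgebra.single h b) a = fun x => b * a (h⁻¹ * x) := by
  show (MonoidAlgebra.liftNC ((lmulHom R G) : R →+ Module.End ℤ (G → R))
      ⇑(translationHom R G)) (MonoidAlgebra.single h b) a = _
  rw [MonoidAlgebra.liftNC_single]
  rfl

theorem convolutionRho_mul_coe (z x : MonoidAlgebra R G) :
    convolutionRho R G z ⇑x.coeff = ⇑(z * x).coeff := by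
  induction z using MonoidAlgebra.induction with
  | zero =>
    show (convolutionRho R G 0) ⇑x.coeff = _
    rw [map_zero, zero_mul]
    rfl
  | single_add h b f _ _ ih =>
    rw [map_add]
    have hadd : (convolutionRho R G (MonoidAlgebra.single h b) + convolutionRho R G f) ⇑x.coeff
        = convolutionRho R G (MonoidAlgebra.single h b) ⇑x.coeff
          + convolutionRho R G f ⇑x.coeff := rfl
    rw [hadd, ih, convolutionRho_single_apply, add_mul]
    funext g
    rw [MA_add_apply, MonoidAlgebra.coeff_single_mul_apply]
    rfl

/-- The `i`-th component, as an element of `R[N]`. -/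
def novComp (χ : G →* Multiplicative ℤ) (t : G) (a : G → R) (i : ℤ)
    (hfin : (Function.support fun mm : ↥χ.ker => a ((mm : G) * t ^ i)).Finite) :
    MonoidAlgebra R ↥χ.ker :=
  MonoidAlgebra.ofCoeff (Finsupp.ofSupportFinite _ hfin)

theorem conv_component (χ : G →* Multiplicative ℤ) (t : G)
    (z : MonoidAlgebra R ↥χ.ker) (a : G → R) (i : ℤ)
    (hfin : (Function.support fun mm : ↥χ.ker => a ((mm : G) * t ^ i)).Finite)
    (nn : ↥χ.ker) :
    (convolutionRho R G (MonoidAlgebra.mapDomain (χ.ker.subtype) z) a) ((nn : G) * t ^ i)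
      = (z * novComp χ t a i hfin).coeff nn := by
  induction z using MonoidAlgebra.induction with
  | zero =>
    rw [MonoidAlgebra.mapDomain_zero]
    show (convolutionRho R G 0) a _ = _
    rw [map_zero, zero_mul]
    rfl
  | single_add m b f _ _ ih =>
    rw [MonoidAlgebra.mapDomain_add, MonoidAlgebra.mapDomain_single, map_add]
    have hadd : ((convolutionRho R G (MonoidAlgebra.single (χ.ker.subtype m) b)
        + convolutionRho R G (MonoidAlgebra.mapDomain (⇑χ.ker.subtype) f)) a) ((nn : G) * t ^ i)
        = (convolutionRho R G (MonoidAlgebra.single (χ.ker.subtype m) b) a) ((nn : G) * t ^ i)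
          + (convolutionRho R G (MonoidAlgebra.mapDomain (⇑χ.ker.subtype) f) a)
            ((nn : G) * t ^ i) := rfl
    rw [hadd, add_mul, ih, MA_add_apply]
    congr 1
    rw [convolutionRho_single_apply, MonoidAlgebra.coeff_single_mul_apply]
    show b * a ((χ.ker.subtype m)⁻¹ * ((nn : G) * t ^ i)) = _
    have hval : (novComp χ t a i hfin).coeff (m⁻¹ * nn)
        = a (((m⁻¹ * nn : ↥χ.ker) : G) * t ^ i) := rfl
    rw [hval]
    have harg : (χ.ker.subtype m)⁻¹ * ((nn : G) * t ^ i)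
        = ((m⁻¹ * nn : ↥χ.ker) : G) * t ^ i := by
      simp [mul_assoc]
    rw [harg]

/-- First preimage function for surjectivity. -/
def ontoPreA (χ : G →* Multiplicative ℤ) (t : G) (ht : χ t = Multiplicative.ofAdd 1)
    (f : ℤ → MonoidAlgebra R ↥χ.ker) : G → R :=
  fun g => if 0 ≤ (χ g).toAdd then
    (f (χ g).toAdd).coeff ⟨g * (t ^ (χ g).toAdd)⁻¹, decomp_mem χ t ht g⟩ else 0

/-- Second preimage function for surjectivity. -/
def ontoPreB (χ : G →* Multiplicative ℤ) (t : G) (ht : χ t = Multiplicative.ofAdd 1)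
    (f : ℤ → MonoidAlgebra R ↥χ.ker) : G → R :=
  fun g => if (χ g).toAdd < 0 then
    -(f (χ g).toAdd).coeff ⟨g * (t ^ (χ g).toAdd)⁻¹, decomp_mem χ t ht g⟩ else 0

theorem ontoPreA_apply (χ : G →* Multiplicative ℤ) (t : G) (ht : χ t = Multiplicative.ofAdd 1)
    (f : ℤ → MonoidAlgebra R ↥χ.ker) (i : ℤ) (nn : ↥χ.ker) :
    ontoPreA χ t ht f ((nn : G) * t ^ i) = if 0 ≤ i then (f i).coeff nn else 0 := by
  have h1 : (χ ((nn : G) * t ^ i)).toAdd = i := toAdd_chi_mul_pow χ t ht nn i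
  have key : ∀ (j : ℤ) (hj : (nn : G) * t ^ i * (t ^ j)⁻¹ ∈ χ.ker), j = i →
      (f j).coeff ⟨(nn : G) * t ^ i * (t ^ j)⁻¹, hj⟩ = (f i).coeff nn := by
    rintro j hj rfl
    congr 1
    exact Subtype.ext (mul_inv_cancel_right _ _)
  unfold ontoPreA
  by_cases h : 0 ≤ i
  · rw [if_pos (by rw [h1]; exact h), if_pos h]
    exact key _ _ h1
  · rw [if_neg (by rw [h1]; exact h), if_neg h]

theorem ontoPreB_apply (χ : G →* Multiplicative ℤ) (t : G) (ht : χ t = Multiplicative.ofAdd 1)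
    (f : ℤ → MonoidAlgebra R ↥χ.ker) (i : ℤ) (nn : ↥χ.ker) :
    ontoPreB χ t ht f ((nn : G) * t ^ i) = if i < 0 then -(f i).coeff nn else 0 := by
  have h1 : (χ ((nn : G) * t ^ i)).toAdd = i := toAdd_chi_mul_pow χ t ht nn i
  have key : ∀ (j : ℤ) (hj : (nn : G) * t ^ i * (t ^ j)⁻¹ ∈ χ.ker), j = i →
      (f j).coeff ⟨(nn : G) * t ^ i * (t ^ j)⁻¹, hj⟩ = (f i).coeff nn := by
    rintro j hj rfl
    congr 1
    exact Subtype.ext (mul_inv_cancel_right _ _)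
  unfold ontoPreB
  by_cases h : i < 0
  · rw [if_pos (by rw [h1]; exact h), if_pos h, key _ _ h1]
  · rw [if_neg (by rw [h1]; exact h), if_neg h]

theorem ontoPreA_mem (χ : G →* Multiplicative ℤ) (t : G) (ht : χ t = Multiplicative.ofAdd 1)
    (f : ℤ → MonoidAlgebra R ↥χ.ker) :
    ontoPreA χ t ht f ∈ NovikovSet R G χ := by
  intro c
  refine (Set.Finite.biUnion (Set.finite_Icc (0:ℤ) c) (fun i _ =>
    ((f i).coeff.support.finite_toSet.image (fun nn : ↥χ.ker => (nn : G) * t ^ i)))).subset ?_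
  rintro g ⟨hne, hle⟩
  have h0 : 0 ≤ (χ g).toAdd := by
    by_contra h
    exact hne (by unfold ontoPreA; rw [if_neg h])
  refine Set.mem_biUnion (Set.mem_Icc.mpr ⟨h0, hle⟩) ?_
  refine ⟨⟨g * (t ^ (χ g).toAdd)⁻¹, decomp_mem χ t ht g⟩, ?_, inv_mul_cancel_right _ _⟩
  rw [Finset.mem_coe, Finsupp.mem_support_iff]
  intro hz
  exact hne (by unfold ontoPreA; rw [if_pos h0, hz])

theorem ontoPreB_mem (χ : G →* Multiplicative ℤ) (t : G) (ht : χ t = Multiplicative.ofAdd 1)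
    (f : ℤ → MonoidAlgebra R ↥χ.ker) :
    ontoPreB χ t ht f ∈ NovikovSet R G χ⁻¹ := by
  intro c
  refine (Set.Finite.biUnion (Set.finite_Icc (-c) (-1:ℤ)) (fun i _ =>
    ((f i).coeff.support.finite_toSet.image (fun nn : ↥χ.ker => (nn : G) * t ^ i)))).subset ?_
  rintro g ⟨hne, hle⟩
  have h0 : (χ g).toAdd < 0 := by
    by_contra h
    exact hne (by unfold ontoPreB; rw [if_neg h])
  have hle' : -(χ g).toAdd ≤ c := by simpa using hle
  refine Set.mem_biUnion (Set.mem_Icc.mpr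
    (⟨by omega, by omega⟩ : -c ≤ (χ g).toAdd ∧ (χ g).toAdd ≤ -1)) ?_
  refine ⟨⟨g * (t ^ (χ g).toAdd)⁻¹, decomp_mem χ t ht g⟩, ?_, inv_mul_cancel_right _ _⟩
  rw [Finset.mem_coe, Finsupp.mem_support_iff]
  intro hz
  exact hne (by unfold ontoPreB; rw [if_pos h0, hz, neg_zero])

end AuxSES

/-- For a surjective character `χ : G → ℤ` with kernel `N` and `t ∈ G`
with `χ(t) = 1`, there is a short exact sequence of left `R[N]`-modules
`0 → R[G] → \widehat{R[G]}^χ ⊕ \widehat{R[G]}^{-χ} → ∏_ℤ R[N] → 0`. -/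
theorem stmt_5 (R : Type) [Ring R] (G : Type) [Group G] (χ : G →* Multiplicative ℤ)
    (hχ : Function.Surjective χ) (t : G) (ht : χ t = Multiplicative.ofAdd 1) :
    Function.Injective (sesInto R G χ) ∧
    Function.Exact (sesInto R G χ) (sesOnto R G χ t ht) ∧
    Function.Surjective (sesOnto R G χ t ht) ∧
    (letI := functionsModule R G
     letI : Module (MonoidAlgebra R ↥χ.ker) (MonoidAlgebra R G) :=
       Module.compHom _ (MonoidAlgebra.mapDomainRingHom R χ.ker.subtype)
     letI : Module (MonoidAlgebra R ↥χ.ker) ↥(Novikov R G χ) :=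
       Module.compHom _ (MonoidAlgebra.mapDomainRingHom R χ.ker.subtype)
     letI : Module (MonoidAlgebra R ↥χ.ker) ↥(Novikov R G χ⁻¹) :=
       Module.compHom _ (MonoidAlgebra.mapDomainRingHom R χ.ker.subtype)
     (∀ (y : MonoidAlgebra R ↥χ.ker) (x : MonoidAlgebra R G),
        sesInto R G χ (y • x) = y • sesInto R G χ x) ∧
     (∀ (y : MonoidAlgebra R ↥χ.ker) (p : ↥(Novikov R G χ) × ↥(Novikov R G χ⁻¹)),
        sesOnto R G χ t ht (y • p) = y • sesOnto R G χ t ht p)) := by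
  refine ⟨?_, ?_, ?_, ?_, ?_⟩
  · -- injectivity
    intro x x' hxx
    exact MonoidAlgebra.ext (Finsupp.ext fun g => congrFun (congrArg (fun p => p.1.1) hxx) g)
  · -- exactness
    intro p
    constructor
    · intro h0
      have hcomp : ∀ (i : ℤ) (mm : ↥χ.ker),
          p.1.1 ((mm : G) * t ^ i) = p.2.1 ((mm : G) * t ^ i) := by
        intro i mm
        have h1 : sesOnto R G χ t ht p i = 0 := congrFun h0 i
        have h3 : (sesOnto R G χ t ht p i).coeff mm = 0 := by rw [h1]; rfl
        have h4 : (sesOnto R G χ t ht p i).coeff mm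
            = p.1.1 ((mm : G) * t ^ i) - p.2.1 ((mm : G) * t ^ i) := rfl
        rw [h4] at h3
        exact sub_eq_zero.mp h3
      have heq : (p.1.1 : G → R) = p.2.1 := by
        funext g
        have hg := hcomp (χ g).toAdd ⟨g * (t ^ (χ g).toAdd)⁻¹, decomp_mem χ t ht g⟩
        have hco : ((⟨g * (t ^ (χ g).toAdd)⁻¹, decomp_mem χ t ht g⟩ : ↥χ.ker) : G)
            * t ^ (χ g).toAdd = g := inv_mul_cancel_right _ _
        rw [hco] at hg
        exact hg
      have hm1 : (p.1.1 : G → R) ∈ NovikovSet R G χ := p.1.2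
      have hm2 : (p.2.1 : G → R) ∈ NovikovSet R G χ⁻¹ := p.2.2
      have hfin : (Function.support (p.1.1 : G → R)).Finite := by
        refine ((hm1 0).union (hm2 0)).subset ?_
        intro g hg
        rcases le_or_gt (χ g).toAdd 0 with hc | hc
        · exact Or.inl ⟨hg, hc⟩
        · refine Or.inr ⟨by rw [← heq]; exact hg, ?_⟩
          show ((χ⁻¹) g).toAdd ≤ 0
          have hinv : ((χ⁻¹) g).toAdd = -(χ g).toAdd := by simp
          omega
      refine ⟨(MonoidAlgebra.ofCoeff (Finsupp.ofSupportFinite _ hfin) : MonoidAlgebra R G),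
          Prod.ext ?_ ?_⟩
      · exact Subtype.ext Finsupp.ofSupportFinite_coe
      · exact Subtype.ext (Finsupp.ofSupportFinite_coe.trans heq)
    · rintro ⟨x, rfl⟩
      funext i
      exact congrArg MonoidAlgebra.ofCoeff (sub_self _)
  · -- surjectivity
    intro f
    refine ⟨(⟨ontoPreA χ t ht f, ontoPreA_mem χ t ht f⟩,
             ⟨ontoPreB χ t ht f, ontoPreB_mem χ t ht f⟩), ?_⟩
    funext i
    refine MA_ext fun nn => ?_
    have hL : (sesOnto R G χ t ht (⟨ontoPreA χ t ht f, ontoPreA_mem χ t ht f⟩,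
             ⟨ontoPreB χ t ht f, ontoPreB_mem χ t ht f⟩) i).coeff nn
        = ontoPreA χ t ht f ((nn : G) * t ^ i)
          - ontoPreB χ t ht f ((nn : G) * t ^ i) := rfl
    rw [hL, ontoPreA_apply, ontoPreB_apply]
    by_cases h : 0 ≤ i
    · rw [if_pos h, if_neg (by omega), sub_zero]
    · rw [if_neg h, if_pos (by omega), zero_sub, neg_neg]
  · -- linearity of sesInto
    intro y x
    refine Prod.ext (Subtype.ext ?_) (Subtype.ext ?_) <;>
      exact (convolutionRho_mul_coe (MonoidAlgebra.mapDomain (⇑χ.ker.subtype) y) x).symm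
  · -- linearity of sesOnto
    intro y p
    funext i
    refine MA_ext fun nn => ?_
    have h1 := component_support_finite R G χ t ht p.1.1 p.1.2 i
    have h2 := component_support_finite' R G χ t ht p.2.1 p.2.2 i
    show (convolutionRho R G (MonoidAlgebra.mapDomain (⇑χ.ker.subtype) y) p.1.1) ((nn : G) * t ^ i)
          - (convolutionRho R G (MonoidAlgebra.mapDomain (⇑χ.ker.subtype) y) p.2.1)
            ((nn : G) * t ^ i)
        = (y * sesOnto R G χ t ht p i).coeff nn
    rw [conv_component χ t y p.1.1 i h1 nn, conv_component χ t y p.2.1 i h2 nn]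
    have h3 : sesOnto R G χ t ht p i
        = novComp χ t p.1.1 i h1 - novComp χ t p.2.1 i h2 := rfl
    rw [h3, mul_sub]
    rfl


end SES
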